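/- If ζ > 0, then for every real β the matrix exponential exp(β·h₁₂) equals the 4×4 matrix [[cosh(βζ)+(h/ζ)sinh(βζ), 0, 0, (η/ζ)sinh(βζ)], [0, cosh(βκ), sinh(βκ), 0], [0, sinh(βκ), cosh(βκ), 0], [(η/ζ)sinh(βζ), 0, 0, cosh(βζ)−(h/ζ)sinh(βζ)]]. -/

import Mathlib

open Matrix

lemma exp_smul_idem (E : Matrix (Fin 4) (Fin 4) ℂ) (hE : E * E = E) (a : ℂ) :
    NormedSpace.exp (a • E) = 1 + (Complex.exp a - 1) • E := by
  have hpow : ∀ n : ℕ, 1 ≤ n → E ^ n = E := by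
    intro n hn
    induction n with
    | zero => omega
    | succ k ih =>
      rcases Nat.lt_or_ge k 1 with h1 | h1
      · interval_cases k
        · simp
      · rw [pow_succ, ih h1, hE]
  have h1 : HasSum (fun n : ℕ => (a ^ n / (n.factorial : ℂ)) • E) (Complex.exp a • E) := by
    have := (NormedSpace.expSeries_div_hasSum_exp a).smul_const E
    rwa [← congrFun Complex.exp_eq_exp_ℂ a] at this
  have h2 := h1.update 0 (1 : Matrix (Fin 4) (Fin 4) ℂ)
  have hfun : Function.update (fun n : ℕ => (a ^ n / (n.factorial : ℂ)) • E) 0 (1 : Matrix (Fin 4) (Fin 4) ℂ)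
      = fun n : ℕ => ((n.factorial : ℂ))⁻¹ • (a • E) ^ n := by
    funext n
    rcases Nat.eq_zero_or_pos n with h0 | h0
    · subst h0; simp
    · rw [Function.update_of_ne (by omega)]
      rw [smul_pow, hpow n h0, smul_smul]
      congr 1
      rw [div_eq_mul_inv, mul_comm]
  rw [hfun] at h2
  rw [NormedSpace.exp_eq_tsum (𝕂 := ℂ)]
  dsimp only
  rw [h2.tsum_eq]
  simp only [pow_zero, Nat.factorial_zero, Nat.cast_one, div_one, one_smul]
  rw [sub_smul, one_smul]
  abel

lemma comm_of_orth {A B : Matrix (Fin 4) (Fin 4) ℂ} (h1 : A * B = 0) (h2 : B * A = 0)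
    (x y : ℂ) : Commute (x • A) (y • B) := by
  unfold Commute SemiconjBy
  rw [smul_mul_smul_comm, smul_mul_smul_comm, h1, h2, smul_zero, smul_zero]

lemma mul_orth {A B : Matrix (Fin 4) (Fin 4) ℂ} (hAB : A * B = 0) :
    (1 + A) * (1 + B) = 1 + (A + B) := by
  rw [mul_add, mul_one, add_mul, one_mul, hAB, add_zero, add_assoc]

set_option maxHeartbeats 4000000 in
/-- The plaquette density matrix of the XY model in a transverse field: if `ζ = √(η²+h²) > 0`
then for every real `β`,
`exp(β·h₁₂) = [[cosh βζ + (h/ζ) sinh βζ, 0, 0, (η/ζ) sinh βζ],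
              [0, cosh βκ, sinh βκ, 0],
              [0, sinh βκ, cosh βκ, 0],
              [(η/ζ) sinh βζ, 0, 0, cosh βζ − (h/ζ) sinh βζ]]`. -/
theorem exp_h12 (η κ h : ℝ) (ζ : ℝ) (hζ : ζ = Real.sqrt (η ^ 2 + h ^ 2)) (hζpos : 0 < ζ)
    (h₁₂ : Matrix (Fin 4) (Fin 4) ℂ)
    (hmat : h₁₂ = !![(h : ℂ), 0, 0, (η : ℂ); 0, 0, (κ : ℂ), 0;
                     0, (κ : ℂ), 0, 0; (η : ℂ), 0, 0, (-h : ℂ)])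
    (β : ℝ) :
    NormedSpace.exp ((β : ℂ) • h₁₂) =
      !![((Real.cosh (β * ζ) + (h / ζ) * Real.sinh (β * ζ) : ℝ) : ℂ), 0, 0,
           (((η / ζ) * Real.sinh (β * ζ) : ℝ) : ℂ);
         0, ((Real.cosh (β * κ) : ℝ) : ℂ), ((Real.sinh (β * κ) : ℝ) : ℂ), 0;
         0, ((Real.sinh (β * κ) : ℝ) : ℂ), ((Real.cosh (β * κ) : ℝ) : ℂ), 0;
         (((η / ζ) * Real.sinh (β * ζ) : ℝ) : ℂ), 0, 0,
           ((Real.cosh (β * ζ) - (h / ζ) * Real.sinh (β * ζ) : ℝ) : ℂ)] := by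
  have hz0 : (ζ : ℂ) ≠ 0 := by exact_mod_cast hζpos.ne'
  have hz2 : (ζ : ℂ) ^ 2 = (η : ℂ) ^ 2 + (h : ℂ) ^ 2 := by
    have : ζ ^ 2 = η ^ 2 + h ^ 2 := by rw [hζ]; exact Real.sq_sqrt (by positivity)
    exact_mod_cast this
  set z : ℂ := (ζ : ℂ) with hzdef
  -- the four (unnormalized) spectral projections
  set N1 : Matrix (Fin 4) (Fin 4) ℂ :=
    !![z + h, 0, 0, (η : ℂ); 0, 0, 0, 0; 0, 0, 0, 0; (η : ℂ), 0, 0, z - h] with hN1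
  set N2 : Matrix (Fin 4) (Fin 4) ℂ :=
    !![z - h, 0, 0, -(η : ℂ); 0, 0, 0, 0; 0, 0, 0, 0; -(η : ℂ), 0, 0, z + h] with hN2
  set N3 : Matrix (Fin 4) (Fin 4) ℂ :=
    !![0, 0, 0, 0; 0, 1, 1, 0; 0, 1, 1, 0; 0, 0, 0, 0] with hN3
  set N4 : Matrix (Fin 4) (Fin 4) ℂ :=
    !![0, 0, 0, 0; 0, 1, -1, 0; 0, -1, 1, 0; 0, 0, 0, 0] with hN4
  set E1 : Matrix (Fin 4) (Fin 4) ℂ := (2 * z)⁻¹ • N1 with hE1def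
  set E2 : Matrix (Fin 4) (Fin 4) ℂ := (2 * z)⁻¹ • N2 with hE2def
  set E3 : Matrix (Fin 4) (Fin 4) ℂ := (2 : ℂ)⁻¹ • N3 with hE3def
  set E4 : Matrix (Fin 4) (Fin 4) ℂ := (2 : ℂ)⁻¹ • N4 with hE4def
  have h2z : (2 * z) ≠ 0 := by simp [hz0]
  -- products of the N matrices
  have hN11 : N1 * N1 = (2 * z) • N1 := by
    ext i j
    fin_cases i <;> fin_cases j <;>
      simp [hN1, Matrix.mul_apply, Fin.sum_univ_four, Matrix.vecHead, Matrix.vecTail, -mul_eq_zero, -smul_eq_zero] <;>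
      first | ring1 | linear_combination hz2 | linear_combination -hz2 |
        linear_combination 2*hz2 | linear_combination (-2)*hz2
  have hN22 : N2 * N2 = (2 * z) • N2 := by
    ext i j
    fin_cases i <;> fin_cases j <;>
      simp [hN2, Matrix.mul_apply, Fin.sum_univ_four, Matrix.vecHead, Matrix.vecTail, -mul_eq_zero, -smul_eq_zero] <;>
      first | ring1 | linear_combination hz2 | linear_combination -hz2 |
        linear_combination 2*hz2 | linear_combination (-2)*hz2
  have hN33 : N3 * N3 = (2 : ℂ) • N3 := by
    ext i j
    fin_cases i <;> fin_cases j <;>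
      simp [hN3, Matrix.mul_apply, Fin.sum_univ_four, Matrix.vecHead, Matrix.vecTail] <;> ring
  have hN44 : N4 * N4 = (2 : ℂ) • N4 := by
    ext i j
    fin_cases i <;> fin_cases j <;>
      simp [hN4, Matrix.mul_apply, Fin.sum_univ_four, Matrix.vecHead, Matrix.vecTail] <;> ring
  have hN12 : N1 * N2 = 0 := by
    ext i j
    fin_cases i <;> fin_cases j <;>
      simp [hN1, hN2, Matrix.mul_apply, Fin.sum_univ_four, Matrix.vecHead, Matrix.vecTail, -mul_eq_zero, -smul_eq_zero] <;>
      first | ring1 | linear_combination hz2 | linear_combination -hz2 |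
        linear_combination 2*hz2 | linear_combination (-2)*hz2
  have hN21 : N2 * N1 = 0 := by
    ext i j
    fin_cases i <;> fin_cases j <;>
      simp [hN1, hN2, Matrix.mul_apply, Fin.sum_univ_four, Matrix.vecHead, Matrix.vecTail, -mul_eq_zero, -smul_eq_zero] <;>
      first | ring1 | linear_combination hz2 | linear_combination -hz2 |
        linear_combination 2*hz2 | linear_combination (-2)*hz2
  have hN13 : N1 * N3 = 0 := by
    ext i j
    fin_cases i <;> fin_cases j <;>
      simp [hN1, hN3, Matrix.mul_apply, Fin.sum_univ_four, Matrix.vecHead, Matrix.vecTail]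
  have hN31 : N3 * N1 = 0 := by
    ext i j
    fin_cases i <;> fin_cases j <;>
      simp [hN1, hN3, Matrix.mul_apply, Fin.sum_univ_four, Matrix.vecHead, Matrix.vecTail]
  have hN14 : N1 * N4 = 0 := by
    ext i j
    fin_cases i <;> fin_cases j <;>
      simp [hN1, hN4, Matrix.mul_apply, Fin.sum_univ_four, Matrix.vecHead, Matrix.vecTail]
  have hN41 : N4 * N1 = 0 := by
    ext i j
    fin_cases i <;> fin_cases j <;>
      simp [hN1, hN4, Matrix.mul_apply, Fin.sum_univ_four, Matrix.vecHead, Matrix.vecTail]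
  have hN23 : N2 * N3 = 0 := by
    ext i j
    fin_cases i <;> fin_cases j <;>
      simp [hN2, hN3, Matrix.mul_apply, Fin.sum_univ_four, Matrix.vecHead, Matrix.vecTail]
  have hN32 : N3 * N2 = 0 := by
    ext i j
    fin_cases i <;> fin_cases j <;>
      simp [hN2, hN3, Matrix.mul_apply, Fin.sum_univ_four, Matrix.vecHead, Matrix.vecTail]
  have hN24 : N2 * N4 = 0 := by
    ext i j
    fin_cases i <;> fin_cases j <;>
      simp [hN2, hN4, Matrix.mul_apply, Fin.sum_univ_four, Matrix.vecHead, Matrix.vecTail]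
  have hN42 : N4 * N2 = 0 := by
    ext i j
    fin_cases i <;> fin_cases j <;>
      simp [hN2, hN4, Matrix.mul_apply, Fin.sum_univ_four, Matrix.vecHead, Matrix.vecTail]
  have hN34 : N3 * N4 = 0 := by
    ext i j
    fin_cases i <;> fin_cases j <;>
      simp [hN3, hN4, Matrix.mul_apply, Fin.sum_univ_four, Matrix.vecHead, Matrix.vecTail] <;> ring
  have hN43 : N4 * N3 = 0 := by
    ext i j
    fin_cases i <;> fin_cases j <;>
      simp [hN3, hN4, Matrix.mul_apply, Fin.sum_univ_four, Matrix.vecHead, Matrix.vecTail] <;> ring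
  -- idempotency of the E matrices
  have hE1 : E1 * E1 = E1 := by
    rw [hE1def, smul_mul_smul_comm, hN11, smul_smul]
    congr 1
    field_simp
  have hE2 : E2 * E2 = E2 := by
    rw [hE2def, smul_mul_smul_comm, hN22, smul_smul]
    congr 1
    field_simp
  have hE3 : E3 * E3 = E3 := by
    rw [hE3def, smul_mul_smul_comm, hN33, smul_smul]
    congr 1
    norm_num
  have hE4 : E4 * E4 = E4 := by
    rw [hE4def, smul_mul_smul_comm, hN44, smul_smul]
    congr 1
    norm_num
  -- orthogonality of the E matrices
  have oE : ∀ {a b : ℂ} {NA NB : Matrix (Fin 4) (Fin 4) ℂ}, NA * NB = 0 →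
      (a • NA) * (b • NB) = 0 := by
    intro a b NA NB hprod
    rw [smul_mul_smul_comm, hprod, smul_zero]
  have hE12 : E1 * E2 = 0 := oE hN12
  have hE21 : E2 * E1 = 0 := oE hN21
  have hE13 : E1 * E3 = 0 := oE hN13
  have hE31 : E3 * E1 = 0 := oE hN31
  have hE14 : E1 * E4 = 0 := oE hN14
  have hE41 : E4 * E1 = 0 := oE hN41
  have hE23 : E2 * E3 = 0 := oE hN23
  have hE32 : E3 * E2 = 0 := oE hN32
  have hE24 : E2 * E4 = 0 := oE hN24
  have hE42 : E4 * E2 = 0 := oE hN42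
  have hE34 : E3 * E4 = 0 := oE hN34
  have hE43 : E4 * E3 = 0 := oE hN43
  -- the spectral decomposition
  set c1 : ℂ := (β : ℂ) * z with hc1
  set c2 : ℂ := -((β : ℂ) * z) with hc2
  set c3 : ℂ := (β : ℂ) * (κ : ℂ) with hc3
  set c4 : ℂ := -((β : ℂ) * (κ : ℂ)) with hc4
  have hsum : (β : ℂ) • h₁₂ = c1 • E1 + (c2 • E2 + (c3 • E3 + c4 • E4)) := by
    rw [hmat, hE1def, hE2def, hE3def, hE4def]
    ext i j
    fin_cases i <;> fin_cases j <;>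
      simp [hN1, hN2, hN3, hN4, hc1, hc2, hc3, hc4, Matrix.smul_apply] <;> field_simp <;> ring
  rw [hsum]
  have comm1 : Commute (c1 • E1) (c2 • E2 + (c3 • E3 + c4 • E4)) :=
    (comm_of_orth hE12 hE21 c1 c2).add_right
      ((comm_of_orth hE13 hE31 c1 c3).add_right (comm_of_orth hE14 hE41 c1 c4))
  have comm2 : Commute (c2 • E2) (c3 • E3 + c4 • E4) :=
    (comm_of_orth hE23 hE32 c2 c3).add_right (comm_of_orth hE24 hE42 c2 c4)
  have comm3 : Commute (c3 • E3) (c4 • E4) := comm_of_orth hE34 hE43 c3 c4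
  rw [Matrix.exp_add_of_commute _ _ comm1, Matrix.exp_add_of_commute _ _ comm2,
    Matrix.exp_add_of_commute _ _ comm3,
    exp_smul_idem E1 hE1 c1, exp_smul_idem E2 hE2 c2,
    exp_smul_idem E3 hE3 c3, exp_smul_idem E4 hE4 c4]
  set x1 : ℂ := Complex.exp c1 - 1 with hx1
  set x2 : ℂ := Complex.exp c2 - 1 with hx2
  set x3 : ℂ := Complex.exp c3 - 1 with hx3
  set x4 : ℂ := Complex.exp c4 - 1 with hx4
  have p34 : (1 + x3 • E3) * (1 + x4 • E4) = 1 + (x3 • E3 + x4 • E4) :=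
    mul_orth (oE hE34)
  have p234 : (1 + x2 • E2) * (1 + (x3 • E3 + x4 • E4))
      = 1 + (x2 • E2 + (x3 • E3 + x4 • E4)) := by
    apply mul_orth
    rw [mul_add, oE hE23, oE hE24, add_zero]
  have p1234 : (1 + x1 • E1) * (1 + (x2 • E2 + (x3 • E3 + x4 • E4)))
      = 1 + (x1 • E1 + (x2 • E2 + (x3 • E3 + x4 • E4))) := by
    apply mul_orth
    rw [mul_add, mul_add, oE hE12, oE hE13, oE hE14, add_zero, add_zero]
  rw [p34, p234, p1234]
  have hz0' : ((ζ:ℝ) : ℂ) ≠ 0 := hz0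
  simp only [hx1, hx2, hx3, hx4, hc1, hc2, hc3, hc4, hE1def, hE2def, hE3def, hE4def,
    hN1, hN2, hN3, hN4, hzdef]
  ext i j
  fin_cases i <;> fin_cases j <;>
    simp only [Matrix.add_apply, Matrix.smul_apply, Matrix.one_apply, smul_eq_mul,
      Matrix.cons_val', Matrix.cons_val_zero, Matrix.cons_val_one, Matrix.head_cons,
      Matrix.empty_val', Matrix.cons_val_fin_one, Matrix.head_fin_const,
      Matrix.cons_val_two, Matrix.cons_val_three, Matrix.vecHead, Matrix.vecTail,
      Fin.mk_zero, Fin.mk_one, Function.comp_apply, Fin.succ_zero_eq_one,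
      Matrix.of_apply, Matrix.cons_val_succ] <;>
  norm_num [Complex.cosh, Complex.sinh, Fin.ext_iff] <;>
  (try field_simp) <;>
  ring
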